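/- Let I be a bounded interval, ϖ > 0, and ρ₁, ρ₂ : I → ℝ be positive functions in the cone C(ϖ) (i.e. ρ(x)/ρ(y) ≤ exp(ϖ|x−y|^{1/3}) for all x,y) with ρ₁(x) > ρ₂(x) for all x ∈ I. Assume moreover that the supremum over I of ρ₂/(ρ₁−ρ₂) is finite, equal to S. Then the difference ρ₁ − ρ₂ belongs to the cone C(ϖ(1 + 2S)), i.e. (ρ₁−ρ₂)(x)/(ρ₁−ρ₂)(y) ≤ exp(ϖ(1+2S)|x−y|^{1/3}) for all x, y ∈ I. -/
import Mathlib


/-- If `ρ₁, ρ₂` lie in the cone `C(ϖ)` on a bounded interval `I`,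
with `ρ₁ > ρ₂` pointwise and `sup_I ρ₂/(ρ₁−ρ₂) = S` finite, then `ρ₁ − ρ₂` lies
in the cone `C(ϖ(1+2S))`. -/
theorem cone_of_difference
    (I : Set ℝ) (hIbdd : Bornology.IsBounded I) (hIconn : I.OrdConnected)
    (ϖ S : ℝ) (hϖ : 0 < ϖ) (ρ₁ ρ₂ : ℝ → ℝ)
    (hpos₁ : ∀ x ∈ I, 0 < ρ₁ x) (hpos₂ : ∀ x ∈ I, 0 < ρ₂ x)
    (hcone₁ : ∀ x ∈ I, ∀ y ∈ I, ρ₁ x / ρ₁ y ≤ Real.exp (ϖ * |x - y| ^ ((1:ℝ)/3)))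
    (hcone₂ : ∀ x ∈ I, ∀ y ∈ I, ρ₂ x / ρ₂ y ≤ Real.exp (ϖ * |x - y| ^ ((1:ℝ)/3)))
    (hgt : ∀ x ∈ I, ρ₂ x < ρ₁ x)
    (hS : IsLUB ((fun x => ρ₂ x / (ρ₁ x - ρ₂ x)) '' I) S) :
    ∀ x ∈ I, ∀ y ∈ I,
      (ρ₁ x - ρ₂ x) / (ρ₁ y - ρ₂ y)
        ≤ Real.exp (ϖ * (1 + 2 * S) * |x - y| ^ ((1:ℝ)/3)) := by
  intro x hx y hy
  set a : ℝ := ϖ * |x - y| ^ ((1:ℝ)/3) with ha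
  have ha0 : 0 ≤ a := mul_nonneg hϖ.le (Real.rpow_nonneg (abs_nonneg _) _)
  have hd : 0 < ρ₁ y - ρ₂ y := sub_pos.mpr (hgt y hy)
  have hSy : ρ₂ y / (ρ₁ y - ρ₂ y) ≤ S := hS.1 ⟨y, hy, rfl⟩
  -- ρ₁ x ≤ exp a * ρ₁ y
  have h1 : ρ₁ x ≤ Real.exp a * ρ₁ y := by
    have := hcone₁ x hx y hy
    have := (div_le_iff₀ (hpos₁ y hy)).mp this
    linarith [this]
  -- exp (-a) * ρ₂ y ≤ ρ₂ x
  have h2 : Real.exp (-a) * ρ₂ y ≤ ρ₂ x := by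
    have h := hcone₂ y hy x hx
    rw [abs_sub_comm] at h
    have h' := (div_le_iff₀ (hpos₂ x hx)).mp h
    have : Real.exp (-a) * ρ₂ y ≤ Real.exp (-a) * (Real.exp a * ρ₂ x) := by
      have := mul_le_mul_of_nonneg_left h' (Real.exp_nonneg (-a))
      linarith [this]
    rwa [← mul_assoc, ← Real.exp_add, neg_add_cancel, Real.exp_zero, one_mul] at this
  -- key: ρ₁ y - exp(-2a) ρ₂ y ≤ (ρ₁ y - ρ₂ y) * (1 + 2a * S)
  have hkey : ρ₁ y - Real.exp (-(2*a)) * ρ₂ y ≤ (ρ₁ y - ρ₂ y) * (1 + 2 * a * S) := by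
    have hexp : 1 - Real.exp (-(2*a)) ≤ 2 * a := by
      nlinarith [Real.add_one_le_exp (-(2*a))]
    have hρS : ρ₂ y ≤ S * (ρ₁ y - ρ₂ y) := by
      rw [div_le_iff₀ hd] at hSy; linarith
    have hρ2 : 0 < ρ₂ y := hpos₂ y hy
    nlinarith [mul_le_mul_of_nonneg_left hρS (mul_nonneg (by norm_num : (0:ℝ) ≤ 2) ha0)]
  have hfin : ρ₁ x - ρ₂ x ≤ Real.exp a * ((ρ₁ y - ρ₂ y) * (1 + 2 * a * S)) := by
    have : ρ₁ x - ρ₂ x ≤ Real.exp a * ρ₁ y - Real.exp (-a) * ρ₂ y := by linarith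
    have hfac : Real.exp a * ρ₁ y - Real.exp (-a) * ρ₂ y
        = Real.exp a * (ρ₁ y - Real.exp (-(2*a)) * ρ₂ y) := by
      rw [mul_sub, ← mul_assoc, ← Real.exp_add]; ring_nf
    calc ρ₁ x - ρ₂ x ≤ Real.exp a * (ρ₁ y - Real.exp (-(2*a)) * ρ₂ y) := by
          rw [← hfac]; exact this
      _ ≤ Real.exp a * ((ρ₁ y - ρ₂ y) * (1 + 2 * a * S)) :=
          mul_le_mul_of_nonneg_left hkey (Real.exp_nonneg a)
  have hS0 : 0 ≤ S := le_trans (le_of_lt (div_pos (hpos₂ y hy) hd)) hSy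
  have h1le : 1 + 2 * a * S ≤ Real.exp (2 * a * S) :=
    Real.add_one_le_exp (2 * a * S) |>.trans_eq' (by ring_nf)
  rw [div_le_iff₀ hd]
  have : Real.exp a * ((ρ₁ y - ρ₂ y) * (1 + 2 * a * S))
      ≤ Real.exp a * ((ρ₁ y - ρ₂ y) * Real.exp (2 * a * S)) := by
    apply mul_le_mul_of_nonneg_left _ (Real.exp_nonneg a)
    exact mul_le_mul_of_nonneg_left h1le hd.le
  have hgoal : ϖ * (1 + 2 * S) * |x - y| ^ ((1:ℝ)/3) = a + 2 * a * S := by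
    rw [ha]; ring
  rw [hgoal, Real.exp_add]
  calc ρ₁ x - ρ₂ x ≤ Real.exp a * ((ρ₁ y - ρ₂ y) * Real.exp (2 * a * S)) :=
        hfin.trans this
    _ = Real.exp a * Real.exp (2 * a * S) * (ρ₁ y - ρ₂ y) := by ring
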